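/- Let K be a field and let (u_k)_{k ≥ 0} be a sequence in K satisfying the linear recurrence u_{k+d} + a_1 u_{k+d-1} + ⋯ + a_d u_k = 0 for all k ≥ 0, with a_1,…,a_d ∈ K. If the Hankel matrix M = (u_{d+i-j-1})_{1 ≤ i,j ≤ d} is singular (det M = 0), then there exist b_1,…,b_d ∈ K, not all zero, such that b_1 u_{k+d-1} + ⋯ + b_d u_k = 0 for all k ≥ 0. -/
import Mathlib


/-- If a sequence satisfies a monic linear recurrence of order `d`
and the Hankel matrix `(u_{d+i-j-1})` is singular, then some nonzero vector `b`
gives a lower-order linear relation valid for all `k`. -/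
theorem hankel_singular_gives_lower_relation
    (K : Type*) [Field K] (d : ℕ) (hd : 0 < d)
    (u : ℕ → K) (a : Fin d → K)
    (hrec : ∀ k : ℕ, u (k + d) + ∑ i : Fin d, a i * u (k + (d - 1 - i.val)) = 0)
    (hdet : (Matrix.of fun i j : Fin d => u (d + i.val - j.val - 1)).det = 0) :
    ∃ b : Fin d → K, b ≠ 0 ∧ ∀ k : ℕ, ∑ i : Fin d, b i * u (k + (d - 1 - i.val)) = 0 := by
  obtain ⟨b, hb0, hbv⟩ :=
    (Matrix.exists_mulVec_eq_zero_iff.mpr hdet :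
      ∃ v ≠ 0, (Matrix.of fun i j : Fin d => u (d + i.val - j.val - 1)).mulVec v = 0)
  refine ⟨b, hb0, ?_⟩
  -- base case: relation holds for k < d
  have hbase : ∀ k : ℕ, k < d → ∑ i : Fin d, b i * u (k + (d - 1 - i.val)) = 0 := by
    intro k hk
    have := congrFun hbv ⟨k, hk⟩
    simp only [Matrix.mulVec, dotProduct, Matrix.of_apply, Pi.zero_apply] at this
    rw [← this]
    apply Finset.sum_congr rfl
    intro j _
    have hj : j.val < d := j.isLt
    rw [mul_comm]
    congr 2
    omega
  intro k
  induction k using Nat.strong_induction_on with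
  | _ k ih =>
    by_cases hk : k < d
    · exact hbase k hk
    · obtain ⟨m, rfl⟩ : ∃ m, k = m + d := ⟨k - d, by omega⟩
      have step : ∀ j : Fin d,
          u (m + d + (d - 1 - j.val))
            = -∑ i : Fin d, a i * u ((m + (d - 1 - j.val)) + (d - 1 - i.val)) := by
        intro j
        have h := hrec (m + (d - 1 - j.val))
        have heq : m + d + (d - 1 - j.val) = (m + (d - 1 - j.val)) + d := by omega
        rw [heq]
        linear_combination h
      calc ∑ i : Fin d, b i * u (m + d + (d - 1 - i.val))
          = ∑ j : Fin d, b j * (-∑ i : Fin d, a i * u ((m + (d - 1 - j.val)) + (d - 1 - i.val))) := by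
            exact Finset.sum_congr rfl fun j _ => by rw [step j]
        _ = -∑ i : Fin d, a i * ∑ j : Fin d, b j * u ((m + (d - 1 - i.val)) + (d - 1 - j.val)) := by
            have key : ∀ j i : Fin d,
                b j * (a i * u ((m + (d - 1 - j.val)) + (d - 1 - i.val)))
                  = a i * (b j * u ((m + (d - 1 - i.val)) + (d - 1 - j.val))) := by
              intro j i
              have : (m + (d - 1 - j.val)) + (d - 1 - i.val)
                   = (m + (d - 1 - i.val)) + (d - 1 - j.val) := by omega
              rw [this]; ring
            simp only [mul_neg, Finset.sum_neg_distrib, neg_inj, Finset.mul_sum]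
            exact Finset.sum_comm.trans
              (Finset.sum_congr rfl fun i _ => Finset.sum_congr rfl fun j _ => key j i)
        _ = 0 := by
            rw [neg_eq_zero]
            apply Finset.sum_eq_zero
            intro i _
            have hlt : m + (d - 1 - i.val) < m + d := by omega
            rw [ih _ hlt, mul_zero]
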